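/- Let A, A', B, B' be partial orders and let (up_A, down_A) be an embedding-projection pair from A to A' and (up_B, down_B) an embedding-projection pair from B to B'. Equip A × B and A' × B' with the product order, and form the extended pair types WithBot (WithTop (A × B)) and WithBot (WithTop (A' × B')), i.e., the product orders extended with a new least element err and a new greatest element unk. Define up and down on the extended types by acting componentwise on embedded pairs (up sends (a, b) to (up_A a, up_B b), down sends (a', b') to (down_A a', down_B b')) and sending err to err and unk to unk. Then (up, down) is an embedding-projection pair between the extended pair types, and on embedded pairs its underlying relation is the conjunction of the component relations: up applied to (a, b) is ≤ the embedding of (a', b') if and only if up_A a ≤ a' and up_B b ≤ b'. -/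

import Mathlib

/-- The componentwise action on extended pair types, sending `err` (the new
bottom) to `err` and `unk` (the new top) to `unk`. -/
def extMap {A B A' B' : Type*} (fA : A → A') (fB : B → B') :
    WithBot (WithTop (A × B)) → WithBot (WithTop (A' × B')) :=
  WithBot.map (WithTop.map (Prod.map fA fB))

theorem extMap_gc {A A' B B' : Type*} [PartialOrder A] [PartialOrder A']
    [PartialOrder B] [PartialOrder B']
    {upA : A → A'} {downA : A' → A} {upB : B → B'} {downB : B' → B}
    (gcA : GaloisConnection upA downA) (gcB : GaloisConnection upB downB) :
    GaloisConnection (extMap upA upB) (extMap downA downB) := by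
  intro x y
  induction x using WithBot.recBotCoe with
  | bot => simp [extMap]
  | coe x =>
    induction y using WithBot.recBotCoe with
    | bot => simp [extMap]
    | coe y =>
      simp only [extMap, WithBot.map_coe, WithBot.coe_le_coe]
      induction y using WithTop.recTopCoe with
      | top => simp
      | coe y =>
        induction x using WithTop.recTopCoe with
        | top => simp
        | coe x =>
          simp only [WithTop.map_coe, WithTop.coe_le_coe, Prod.map, Prod.le_def]
          exact and_congr (gcA _ _) (gcB _ _)

/-- ep-pairs between the components induce an ep-pair between the
extended pair types `WithBot (WithTop (A × B))` and `WithBot (WithTop (A' × B'))`,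
acting componentwise on embedded pairs and sending `err` to `err` and `unk` to
`unk`; on embedded pairs its underlying relation is the conjunction of the
component relations. -/
theorem stmt6 {A A' B B' : Type*} [PartialOrder A] [PartialOrder A']
    [PartialOrder B] [PartialOrder B']
    (upA : A → A') (downA : A' → A) (upB : B → B') (downB : B' → B)
    (hupA : Monotone upA) (hdownA : Monotone downA)
    (hupB : Monotone upB) (hdownB : Monotone downB)
    (gcA : GaloisConnection upA downA) (gcB : GaloisConnection upB downB)
    (retrA : ∀ a : A, downA (upA a) = a) (retrB : ∀ b : B, downB (upB b) = b) :
    extMap upA upB ⊥ = ⊥ ∧ extMap upA upB ⊤ = ⊤ ∧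
    extMap downA downB ⊥ = ⊥ ∧ extMap downA downB ⊤ = ⊤ ∧
    Monotone (extMap upA upB) ∧ Monotone (extMap downA downB) ∧
    GaloisConnection (extMap upA upB) (extMap downA downB) ∧
    (∀ x : WithBot (WithTop (A × B)), extMap downA downB (extMap upA upB x) = x) ∧
    (∀ (a : A) (b : B) (a' : A') (b' : B'),
      extMap upA upB (((a, b) : A × B) : WithBot (WithTop (A × B))) ≤
        ((((a', b') : A' × B') : WithTop (A' × B')) : WithBot (WithTop (A' × B'))) ↔
      upA a ≤ a' ∧ upB b ≤ b') := by
  refine ⟨rfl, rfl, rfl, rfl,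
    ((hupA.prodMap hupB).withTop_map).withBot_map,
    ((hdownA.prodMap hdownB).withTop_map).withBot_map,
    extMap_gc gcA gcB, ?_, ?_⟩
  · intro x
    induction x using WithBot.recBotCoe with
    | bot => rfl
    | coe x =>
      induction x using WithTop.recTopCoe with
      | top => rfl
      | coe x =>
        simp [extMap, Prod.map, retrA, retrB]
  · intro a b a' b'
    simp [extMap, WithBotTop.coe, Prod.map, Prod.le_def]
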